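/- Let A be a Hopf algebra with coproduct Δ, counit ε, antipode κ, and let ad : A → A ⊗ A denote the right adjoint coaction ad(a) = a⁽²⁾ ⊗ κ(a⁽¹⁾)a⁽³⁾. Let H be a right A-comodule algebra with coaction F, and let ρ : A → H be a linear map satisfying F(ρ(a)) = (ρ ⊗ id)(ad(a)) for all a ∈ A. Then the subspace R = ker ε ∩ ker ρ satisfies ad(R) ⊆ R ⊗ A. -/

import Mathlib

open TensorProduct

noncomputable section

variable {A H : Type*} [Ring A] [HopfAlgebra ℂ A] [Ring H] [Algebra ℂ H]

/-- The comodule axioms for a coaction `F : H → H ⊗ A`: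
`(F ⊗ id)F = (id ⊗ Δ)F` and `(id ⊗ ε)F = id`. -/
def IsCoaction (F : H →ₐ[ℂ] H ⊗[ℂ] A) : Prop :=
  (∀ φ : H, LinearMap.rTensor A F.toLinearMap (F φ) =
      (TensorProduct.assoc ℂ H A A).symm
        (LinearMap.lTensor H (Coalgebra.comul (R := ℂ)) (F φ))) ∧
  (∀ φ : H, TensorProduct.rid ℂ H
      (LinearMap.lTensor H (Coalgebra.counit (R := ℂ)) (F φ)) = φ)

/-- Freeness of the coaction: every `1 ⊗ a` is of the form `Σᵢ qᵢ F(bᵢ)`. -/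
def IsFree (F : H →ₐ[ℂ] H ⊗[ℂ] A) : Prop :=
  ∀ a : A, ∃ (n : ℕ) (q b : Fin n → H),
    ∑ i, ((q i) ⊗ₜ[ℂ] (1 : A)) * F (b i) = (1 : H) ⊗ₜ[ℂ] a

/-- The Sweedler-type operator `φ ↦ Σ_k φ_k ρ(c_k)` where `F φ = Σ_k φ_k ⊗ c_k`. -/
def sw (F : H →ₐ[ℂ] H ⊗[ℂ] A) (ρ : A →ₗ[ℂ] H) (φ : H) : H :=
  LinearMap.mul' ℂ H (LinearMap.lTensor H ρ (F φ))

/-- The right adjoint coaction `ad a = a⁽²⁾ ⊗ κ(a⁽¹⁾)a⁽³⁾`. -/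
def adc : A →ₗ[ℂ] A ⊗[ℂ] A :=
  (LinearMap.lTensor A (LinearMap.mul' ℂ A)) ∘ₗ
  (TensorProduct.leftComm ℂ A A A).toLinearMap ∘ₗ
  (LinearMap.rTensor (A ⊗[ℂ] A) (HopfAlgebra.antipode (R := ℂ))) ∘ₗ
  (LinearMap.lTensor A (Coalgebra.comul (R := ℂ))) ∘ₗ (Coalgebra.comul (R := ℂ))

lemma claim1 (c : A) :
    (TensorProduct.map (Coalgebra.counit (R := ℂ)) (LinearMap.mul' ℂ A)) ∘ₗ
      (TensorProduct.leftComm ℂ A A A).toLinearMap ∘ₗ (TensorProduct.mk ℂ A (A ⊗[ℂ] A) c) =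
    (TensorProduct.lid ℂ A).symm.toLinearMap ∘ₗ (LinearMap.mulLeft ℂ c) ∘ₗ
      (TensorProduct.lid ℂ A).toLinearMap ∘ₗ
      (LinearMap.rTensor A (Coalgebra.counit (R := ℂ))) := by
  apply TensorProduct.ext'
  intro u v
  simp [TensorProduct.smul_tmul', TensorProduct.smul_tmul, TensorProduct.tmul_smul]

lemma key :
    (TensorProduct.map (Coalgebra.counit (R := ℂ)) (LinearMap.mul' ℂ A)) ∘ₗ
      (TensorProduct.leftComm ℂ A A A).toLinearMap ∘ₗ
      (LinearMap.rTensor (A ⊗[ℂ] A) (HopfAlgebra.antipode (R := ℂ))) ∘ₗ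
      (LinearMap.lTensor A (Coalgebra.comul (R := ℂ))) =
    (TensorProduct.lid ℂ A).symm.toLinearMap ∘ₗ (LinearMap.mul' ℂ A) ∘ₗ
      (LinearMap.rTensor A (HopfAlgebra.antipode (R := ℂ))) := by
  apply TensorProduct.ext'
  intro x y
  have h := LinearMap.congr_fun (claim1 (HopfAlgebra.antipode (R := ℂ) x))
      (Coalgebra.comul (R := ℂ) y)
  simp only [LinearMap.coe_comp, Function.comp_apply, TensorProduct.mk_apply,
    LinearEquiv.coe_coe] at h ⊢
  simp only [LinearMap.rTensor_tmul, LinearMap.lTensor_tmul]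
  rw [h, Coalgebra.rTensor_counit_comul]
  simp

lemma counit_adc (a : A) :
    LinearMap.rTensor A (Coalgebra.counit (R := ℂ)) (adc (A := A) a) =
      (Coalgebra.counit (R := ℂ) a) ⊗ₜ[ℂ] (1 : A) := by
  have h0 : LinearMap.rTensor A (Coalgebra.counit (R := ℂ)) ∘ₗ
      (LinearMap.lTensor A (LinearMap.mul' ℂ A)) =
      TensorProduct.map (Coalgebra.counit (R := ℂ)) (LinearMap.mul' ℂ A) :=
    TensorProduct.ext' fun x y => rfl
  have h1 := LinearMap.congr_fun key (Coalgebra.comul (R := ℂ) a)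
  simp only [LinearMap.coe_comp, Function.comp_apply, LinearEquiv.coe_coe] at h1
  have : LinearMap.rTensor A (Coalgebra.counit (R := ℂ)) (adc (A := A) a) =
      (TensorProduct.map (Coalgebra.counit (R := ℂ)) (LinearMap.mul' ℂ A))
        ((TensorProduct.leftComm ℂ A A A)
          ((LinearMap.rTensor (A ⊗[ℂ] A) (HopfAlgebra.antipode (R := ℂ)))
            ((LinearMap.lTensor A (Coalgebra.comul (R := ℂ)))
              (Coalgebra.comul (R := ℂ) a)))) := by
    simp only [adc, LinearMap.coe_comp, Function.comp_apply, LinearEquiv.coe_coe]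
    exact LinearMap.congr_fun h0 _
  rw [this, h1]
  have h2 : (LinearMap.mul' ℂ A)
      ((LinearMap.rTensor A (HopfAlgebra.antipode (R := ℂ))) (Coalgebra.comul (R := ℂ) a)) =
      algebraMap ℂ A (Coalgebra.counit (R := ℂ) a) :=
    HopfAlgebra.mul_antipode_rTensor_comul_apply a
  rw [h2]
  simp [Algebra.algebraMap_eq_smul_one, TensorProduct.smul_tmul']

lemma prodLeft_rTensor_prod {M N P Q : Type*} [AddCommGroup M] [AddCommGroup N]
    [AddCommGroup P] [AddCommGroup Q] [Module ℂ M] [Module ℂ N] [Module ℂ P] [Module ℂ Q]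
    (g : M →ₗ[ℂ] N) (h : M →ₗ[ℂ] P) (t : M ⊗[ℂ] Q) :
    TensorProduct.prodLeft ℂ ℂ N P Q (LinearMap.rTensor Q (g.prod h) t) =
      (LinearMap.rTensor Q g t, LinearMap.rTensor Q h t) := by
  induction t using TensorProduct.induction_on with
  | zero => simp; rfl
  | tmul x y => simp
  | add x y hx hy => simp [map_add, hx, hy, Prod.ext_iff]


/-!  STATEMENT 5: if `F(ρ(a)) = (ρ ⊗ id)(ad a)` for all `a`, then
`R = ker ε ∩ ker ρ` satisfies `ad(R) ⊆ R ⊗ A`. -/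

theorem kernel_is_ad_invariant
    (F : H →ₐ[ℂ] H ⊗[ℂ] A) (hco : IsCoaction F)
    (ρ : A →ₗ[ℂ] H)
    (hcov : ∀ a : A, F (ρ a) = LinearMap.rTensor A ρ (adc a)) :
    ∀ a ∈ (LinearMap.ker (Coalgebra.counit (R := ℂ) (A := A)) ⊓
            LinearMap.ker ρ),
      adc a ∈ LinearMap.range (LinearMap.rTensor A
        (LinearMap.ker (Coalgebra.counit (R := ℂ) (A := A)) ⊓
          LinearMap.ker ρ).subtype) := by
  intro a ha
  rw [Submodule.mem_inf, LinearMap.mem_ker, LinearMap.mem_ker] at ha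
  obtain ⟨h1, h2⟩ := ha
  set f : A →ₗ[ℂ] ℂ × H := (Coalgebra.counit (R := ℂ)).prod ρ with hf
  have hker : LinearMap.ker (Coalgebra.counit (R := ℂ) (A := A)) ⊓ LinearMap.ker ρ
      = LinearMap.ker f := (LinearMap.ker_prod _ _).symm
  rw [hker]
  have hex : Function.Exact ((LinearMap.ker f).subtype.rTensor A) (f.rTensor A) :=
    Module.Flat.rTensor_exact A (LinearMap.exact_subtype_ker_map f)
  refine (hex (adc a)).mp ?_
  have hinj := (TensorProduct.prodLeft ℂ ℂ ℂ H A).injective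
  apply hinj
  have e1 : LinearMap.rTensor A (Coalgebra.counit (R := ℂ)) (adc a) = 0 := by
    rw [counit_adc, h1, TensorProduct.zero_tmul]
  have e2 : LinearMap.rTensor A ρ (adc a) = 0 := by
    rw [← hcov, h2, map_zero]
  rw [prodLeft_rTensor_prod, e1, e2, LinearEquiv.map_zero]
  rfl
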